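/- Let M : [0,∞) → ℝ be nondecreasing, concave, and differentiable with M(0) = 0, and let ε ∈ (0, 1/2). If û > 0 and ū satisfy (1−ε)·û ≤ ū ≤ (1+ε)·û, then M(û) − M(ū) + (ū − û)·M'(û) ≤ 2ε·M(ū). -/

import Mathlib

open Real

/-- For a nondecreasing, concave, differentiable `M` on `[0,∞)` with `M 0 = 0`,
ε ∈ (0,1/2), `û > 0`, `ū ≥ 0` with `(1−ε) û ≤ ū ≤ (1+ε) û`, one has
`M(û) − M(ū) + (ū − û) M'(û) ≤ 2ε M(ū)`. -/
theorem concave_gap_bound (M : ℝ → ℝ)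
    (hmono : MonotoneOn M (Set.Ici 0))
    (hconc : ConcaveOn ℝ (Set.Ici 0) M)
    (hdiff : ∀ x ∈ Set.Ici (0 : ℝ), DifferentiableAt ℝ M x)
    (h0 : M 0 = 0)
    (ε : ℝ) (hε : ε ∈ Set.Ioo (0 : ℝ) (1/2))
    (uh ub : ℝ) (huh : 0 < uh) (hub : 0 ≤ ub)
    (h1 : (1 - ε) * uh ≤ ub) (h2 : ub ≤ (1 + ε) * uh) :
    M uh - M ub + (ub - uh) * deriv M uh ≤ 2 * ε * M ub := by
  obtain ⟨hε0, hε1⟩ := hε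
  have h1e : 0 < 1 - ε := by linarith
  have hub0 : 0 < ub := lt_of_lt_of_le (by positivity) h1
  -- derivative nonneg on Ici 0
  have hderiv_nonneg : ∀ x : ℝ, 0 ≤ x → 0 ≤ deriv M x := by
    intro x hx
    have hs := hconc.slope_le_deriv (x := x) (y := x + 1)
      (by exact hx) (by simp [Set.mem_Ici]; linarith) (by linarith)
      (hdiff x hx)
    have hM : M x ≤ M (x + 1) := hmono hx (by simp [Set.mem_Ici]; linarith) (by linarith)
    have : slope M x (x + 1) = M (x + 1) - M x := by
      rw [slope_def_field]; field_simp; ring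
    linarith [hs, this ▸ hs]
  -- tangent bound at a point x > 0 : x * deriv M x ≤ M x
  have htang : ∀ x : ℝ, 0 < x → x * deriv M x ≤ M x := by
    intro x hx
    have hs := hconc.deriv_le_slope (x := 0) (y := x)
      (Set.self_mem_Ici) (le_of_lt hx) hx (hdiff x (le_of_lt hx))
    have : slope M 0 x = M x / x := by
      rw [slope_def_field, h0]; ring_nf
    rw [this] at hs
    rw [mul_comm]
    exact (le_div_iff₀ hx).mp hs
  have hMub0 : 0 ≤ M ub := h0 ▸ hmono Set.self_mem_Ici hub hub
  have hd0 : 0 ≤ deriv M uh := hderiv_nonneg uh huh.le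
  rcases le_or_gt uh ub with hcase | hcase
  · -- ub ≥ uh : M uh ≤ M ub, and (ub - uh) * d ≤ ε * uh * d ≤ ε * M uh
    have hMle : M uh ≤ M ub := hmono huh.le hub hcase
    have h3 : ub - uh ≤ ε * uh := by nlinarith
    have h4 : (ub - uh) * deriv M uh ≤ ε * (uh * deriv M uh) := by nlinarith
    have h5 : uh * deriv M uh ≤ M uh := htang uh huh
    nlinarith
  · -- ub < uh : M uh - M ub ≤ (uh - ub) * deriv M ub ≤ ε/(1-ε) * M ub
    have he0 : 0 ≤ deriv M ub := hderiv_nonneg ub hub0.le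
    have hs := hconc.slope_le_deriv (x := ub) (y := uh) hub huh.le hcase
      (hdiff ub hub)
    have hslope : slope M ub uh = (M uh - M ub) / (uh - ub) := by
      rw [slope_def_field]
    rw [hslope] at hs
    have h6 : M uh - M ub ≤ (uh - ub) * deriv M ub := by
      have := (div_le_iff₀ (by linarith : (0:ℝ) < uh - ub)).mp hs
      linarith
    have h7 : uh - ub ≤ ε * uh := by nlinarith
    have h8 : (1 - ε) * uh ≤ ub := h1
    have h9 : ub * deriv M ub ≤ M ub := htang ub hub0
    have h10 : (ub - uh) * deriv M uh ≤ 0 :=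
      mul_nonpos_of_nonpos_of_nonneg (by linarith) hd0
    -- (uh - ub) * e ≤ ε * uh * e ≤ (ε/(1-ε)) * ub * e ≤ (ε/(1-ε)) * M ub ≤ 2ε M ub
    have h11 : (1 - ε) * (uh * deriv M ub) ≤ ub * deriv M ub := by nlinarith
    nlinarith [mul_nonneg hε0.le (mul_nonneg huh.le he0)]
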